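/- The partial involution f_W realizes the contraction combinator: for all partial injective functions a and b on T, (f_W • a) • (!b) = (a • (!b)) • (!b). -/

import Mathlib

/-- Ground terms over the signature Σ = {ε, l, r, p}. -/
inductive T : Type
  | eps : T
  | l : T → T
  | r : T → T
  | p : T → T → T
  deriving DecidableEq

/-- A relation is functional. -/
def Fnal {α : Type*} (f : α → α → Prop) : Prop :=
  ∀ x y z, f x y → f x z → y = z

/-- A relation is injective. -/
def Inj {α : Type*} (f : α → α → Prop) : Prop :=
  ∀ x y z, f x z → f y z → x = y

/-- A partial injective function on `T`, viewed as a relation. -/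
def PartialInjection (f : T → T → Prop) : Prop := Fnal f ∧ Inj f

/-- A partial involution on `T`: a partial injective function that is symmetric. -/
def PartialInvolution (f : T → T → Prop) : Prop :=
  PartialInjection f ∧ ∀ x y, f x y → f y x

/-- Replication: `!f = {(p(t,u), p(t,v)) | t ∈ T, (u,v) ∈ f}`. -/
def Repl (f : T → T → Prop) : T → T → Prop :=
  fun a b => ∃ t u v, f u v ∧ a = T.p t u ∧ b = T.p t v

/-- Relational composition: `(u,w) ∈ f ; g` iff `∃ v, (u,v) ∈ f ∧ (v,w) ∈ g`. -/
def RComp (f g : T → T → Prop) : T → T → Prop :=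
  fun u w => ∃ v, f u v ∧ g v w

/-- Linear application:
`f • g = f_rr ∪ (f_rl ; g ; (f_ll ; g)* ; f_lr)` where
`f_ij = {(u,v) | (i(u), j(v)) ∈ f}` for `i, j ∈ {l, r}`. -/
def LApp (f g : T → T → Prop) : T → T → Prop :=
  fun u v =>
    f (T.r u) (T.r v) ∨
    RComp (fun a b => f (T.r a) (T.l b))
      (RComp g
        (RComp (Relation.ReflTransGen (RComp (fun a b => f (T.l a) (T.l b)) g))
          (fun a b => f (T.l a) (T.r b)))) u v

/-- The partial involution realizing the contraction combinator `W`: the symmetric closure of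
`{(r(r(t)), l(r(r(t))))} ∪ {(l(l(p(t,u))), r(l(p(l(t),u))))} ∪ {(l(r(l(p(t,u)))), r(l(p(r(t),u))))}`. -/
def fW : T → T → Prop := fun a b =>
  (∃ t, a = T.r (T.r t) ∧ b = T.l (T.r (T.r t))) ∨
  (∃ t, a = T.l (T.r (T.r t)) ∧ b = T.r (T.r t)) ∨
  (∃ t u, a = T.l (T.l (T.p t u)) ∧ b = T.r (T.l (T.p (T.l t) u))) ∨
  (∃ t u, a = T.r (T.l (T.p (T.l t) u)) ∧ b = T.l (T.l (T.p t u))) ∨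
  (∃ t u, a = T.l (T.r (T.l (T.p t u))) ∧ b = T.r (T.l (T.p (T.r t) u))) ∨
  (∃ t u, a = T.r (T.l (T.p (T.r t) u)) ∧ b = T.l (T.r (T.l (T.p t u))))

namespace WProof

open Relation

/-! ### Generic lemmas about reflexive transitive closures -/

lemma rtg_congr {α : Type*} {P Q : α → α → Prop} (h : ∀ u v, P u v ↔ Q u v) {x y : α} :
    ReflTransGen P x y ↔ ReflTransGen Q x y :=
  ⟨ReflTransGen.mono (fun u v hu => (h u v).1 hu) x y,
   ReflTransGen.mono (fun u v hu => (h u v).2 hu) x y⟩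

lemma rtg_empty {α : Type*} {P : α → α → Prop} (h0 : ∀ u v, ¬ P u v) {x y : α}
    (h : ReflTransGen P x y) : x = y := by
  induction h with
  | refl => rfl
  | tail _ hs _ => exact absurd hs (h0 _ _)

/-- Shuffle: a `(P;Q)`-chain with a `Q`-entry and a `P`-exit is a `(Q;P)`-chain. -/
lemma shuffle {α : Type*} {P Q : α → α → Prop} {x y : α}
    (h : ReflTransGen (fun u v => ∃ m, P u m ∧ Q m v) x y)
    {z : α} (hy : P y z) {w : α} (hw : Q w x) :
    ReflTransGen (fun u v => ∃ m, Q u m ∧ P m v) w z := by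
  induction h using ReflTransGen.head_induction_on generalizing w with
  | refl => exact ReflTransGen.single ⟨y, hw, hy⟩
  | head hstep _ ih =>
      obtain ⟨m, hPm, hQm⟩ := hstep
      exact ReflTransGen.head ⟨_, hw, hPm⟩ (ih hQm)

lemma rtg_union {α : Type*} {P Q : α → α → Prop} {x y : α} :
    ReflTransGen (fun u v => P u v ∨ Q u v) x y ↔
      ∃ z, ReflTransGen P x z ∧
        ReflTransGen (fun u v => ∃ m, Q u m ∧ ReflTransGen P m v) z y := by
  constructor
  · intro h
    induction h using ReflTransGen.head_induction_on with
    | refl => exact ⟨y, .refl, .refl⟩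
    | head hstep _ ih =>
        obtain ⟨z, hz1, hz2⟩ := ih
        cases hstep with
        | inl hP => exact ⟨z, .head hP hz1, hz2⟩
        | inr hQ => exact ⟨_, .refl, .head ⟨_, hQ, hz1⟩ hz2⟩
  · rintro ⟨z, h1, h2⟩
    refine ReflTransGen.trans (ReflTransGen.mono (fun u v h => Or.inl h) _ _ h1) ?_
    induction h2 with
    | refl => exact .refl
    | tail _ hstep ih =>
        obtain ⟨m, hQ, hP⟩ := hstep
        exact ih.trans (ReflTransGen.head (Or.inr hQ) (ReflTransGen.mono (fun u v h => Or.inl h) _ _ hP))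

/-! ### The generic decode/encode framework

`C` is a coding of the `!b`-side addresses, `β` the induced step on coded addresses. -/

/-- One internal step of `LApp F (Repl b)` seen through the coding `C`. -/
def Gstep (C A : T → T → Prop) (b : T → T → Prop) : T → T → Prop :=
  fun u v => ∃ m s t, C u s ∧ C m t ∧ A s t ∧ Repl b m v

section Generic

variable {b C β A : T → T → Prop}

variable (hG1 : ∀ w s w', C w s → Repl b w w' → ∃ s', β s s' ∧ C w' s')
variable (hG2 : ∀ w s s', C w s → β s s' → ∃ w', Repl b w w' ∧ C w' s')
variable (hG3 : ∀ s s', β s s' → ∃ w, C w s)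
variable (hG4 : ∀ w s s', C w s → C w s' → s = s')

include hG1 hG4 in
lemma gencode {w z : T} (h : ReflTransGen (Gstep C A b) w z) :
    ∀ s, C w s → ∃ t, C z t ∧
      ReflTransGen (fun u v => ∃ m, A u m ∧ β m v) s t := by
  induction h using ReflTransGen.head_induction_on with
  | refl => exact fun s hs => ⟨s, hs, .refl⟩
  | head hstep _ ih =>
      intro s hs
      obtain ⟨m, s0, t0, hCu, hCm, hA, hrep⟩ := hstep
      obtain ⟨t', hβ, hC'⟩ := hG1 _ _ _ hCm hrep
      obtain ⟨tz, hCz, hchain⟩ := ih _ hC'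
      obtain rfl : s = s0 := hG4 _ _ _ hs hCu
      exact ⟨tz, hCz, ReflTransGen.head ⟨t0, hA, hβ⟩ hchain⟩

include hG2 hG3 in
lemma gdecode_fwd {f y : T}
    (h : ReflTransGen (fun u v => ∃ m, β u m ∧ A m v) f y) :
    f = y ∨ ∃ w w' z s, C w f ∧ Repl b w w' ∧
      ReflTransGen (Gstep C A b) w' z ∧ C z s ∧ A s y := by
  induction h using ReflTransGen.head_induction_on with
  | refl => exact Or.inl rfl
  | head hstep _ ih =>
      obtain ⟨m, hβ, hA⟩ := hstep
      obtain ⟨w, hCw⟩ := hG3 _ _ hβ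
      obtain ⟨w', hrep, hCw'⟩ := hG2 _ _ _ hCw hβ
      right
      cases ih with
      | inl heq =>
          subst heq
          exact ⟨w, w', w', m, hCw, hrep, .refl, hCw', hA⟩
      | inr hr =>
          obtain ⟨w2, w2', z, s, hC2, hrep2, hch, hCz, hAy⟩ := hr
          exact ⟨w, w', z, s, hCw, hrep,
            ReflTransGen.head ⟨w2, m, _, hCw', hC2, hA, hrep2⟩ hch, hCz, hAy⟩

include hG1 hG4 in
lemma gdecode_bwd {f y : T}
    (h : f = y ∨ ∃ w w' z s, C w f ∧ Repl b w w' ∧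
      ReflTransGen (Gstep C A b) w' z ∧ C z s ∧ A s y) :
    ReflTransGen (fun u v => ∃ m, β u m ∧ A m v) f y := by
  rcases h with rfl | ⟨w, w', z, s, hCw, hrep, hch, hCz, hA⟩
  · exact .refl
  · obtain ⟨f1, hβ, hCw'⟩ := hG1 _ _ _ hCw hrep
    obtain ⟨t, hCt, hchain⟩ := gencode hG1 hG4 hch _ hCw'
    obtain rfl : t = s := hG4 _ _ _ hCt hCz
    exact shuffle hchain hA hβ

include hG1 hG2 hG3 hG4 in
/-- Master characterization of `LApp F (Repl b)` when `F` is given by a coding. -/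
lemma master {F CM : T → T → Prop} {ρ : T → T}
    (hF : ∀ u v, F u v ↔ ∃ s t, CM u s ∧ CM v t ∧ A s t)
    (hr : ∀ u s, CM (T.r u) s ↔ s = ρ u)
    (hC : ∀ w s, C w s ↔ CM (T.l w) s)
    (x y : T) :
    LApp F (Repl b) x y ↔
      ∃ e, A (ρ x) e ∧
        ReflTransGen (fun u v => ∃ m, β u m ∧ A m v) e (ρ y) := by
  have hcong : ∀ u v, RComp (fun a b => F (T.l a) (T.l b)) (Repl b) u v ↔ Gstep C A b u v := by
    intro u v
    constructor
    · rintro ⟨m, hF1, hrep⟩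
      obtain ⟨s, t, hs, ht, hA⟩ := (hF _ _).1 hF1
      exact ⟨m, s, t, (hC _ _).2 hs, (hC _ _).2 ht, hA, hrep⟩
    · rintro ⟨m, s, t, hs, ht, hA, hrep⟩
      exact ⟨m, (hF _ _).2 ⟨s, t, (hC _ _).1 hs, (hC _ _).1 ht, hA⟩, hrep⟩
  constructor
  · rintro (h1 | ⟨v1, hF1, v2, hrep, v3, hch, hF2⟩)
    · obtain ⟨s, t, hs, ht, hA⟩ := (hF _ _).1 h1
      rw [hr] at hs ht; subst hs; subst ht
      exact ⟨ρ y, hA, .refl⟩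
    · obtain ⟨s, t, hs, ht, hA⟩ := (hF _ _).1 hF1
      rw [hr] at hs; subst hs
      obtain ⟨s2, t2, hs2, ht2, hA2⟩ := (hF _ _).1 hF2
      rw [hr] at ht2; subst ht2
      refine ⟨t, hA, gdecode_bwd hG1 hG4 (Or.inr ⟨v1, v2, v3, s2, (hC _ _).2 ht, hrep, ?_,
        (hC _ _).2 hs2, hA2⟩)⟩
      exact (rtg_congr hcong).1 hch
  · rintro ⟨e, hA, hch⟩
    rcases gdecode_fwd hG2 hG3 hch with rfl | ⟨w, w', z, s, hCw, hrep, hch', hCz, hAs⟩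
    · exact Or.inl ((hF _ _).2 ⟨ρ x, ρ y, (hr _ _).2 rfl, (hr _ _).2 rfl, hA⟩)
    · refine Or.inr ⟨w, (hF _ _).2 ⟨ρ x, e, (hr _ _).2 rfl, (hC _ _).1 hCw, hA⟩,
        w', hrep, z, (rtg_congr hcong).2 hch', (hF _ _).2 ⟨s, ρ y, (hC _ _).1 hCz,
          (hr _ _).2 rfl, hAs⟩⟩

end Generic

/-! ### Concrete codings -/

/-- The `b`-step on `l`-coded addresses. -/
def BL (b : T → T → Prop) : T → T → Prop := fun e e' =>
  ∃ t c c', b c c' ∧ e = T.l (T.p t c) ∧ e' = T.l (T.p t c')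

/-- The `b`-step on `r`-coded addresses. -/
def BR (b : T → T → Prop) : T → T → Prop := fun e e' =>
  ∃ t c c', b c c' ∧ e = T.r (T.l (T.p t c)) ∧ e' = T.r (T.l (T.p t c'))

/-- Both kinds of `b`-steps. -/
def BS (b : T → T → Prop) : T → T → Prop := fun e e' => BL b e e' ∨ BR b e e'

/-- The address translation realized by `fW`. -/
def M : T → T → Prop := fun u s =>
  (∃ t, u = T.r t ∧ s = T.r (T.r t)) ∨
  (∃ t c, u = T.l (T.p (T.l t) c) ∧ s = T.l (T.p t c)) ∨
  (∃ t c, u = T.l (T.p (T.r t) c) ∧ s = T.r (T.l (T.p t c)))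

lemma fW_rr (u v : T) : ¬ fW (T.r u) (T.r v) := by
  rintro (⟨t, h1, h2⟩ | ⟨t, h1, h2⟩ | ⟨t, c, h1, h2⟩ | ⟨t, c, h1, h2⟩ |
    ⟨t, c, h1, h2⟩ | ⟨t, c, h1, h2⟩) <;> simp_all

lemma fW_ll (u v : T) : ¬ fW (T.l u) (T.l v) := by
  rintro (⟨t, h1, h2⟩ | ⟨t, h1, h2⟩ | ⟨t, c, h1, h2⟩ | ⟨t, c, h1, h2⟩ |
    ⟨t, c, h1, h2⟩ | ⟨t, c, h1, h2⟩) <;> simp_all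

lemma fW_rl (u v : T) : fW (T.r u) (T.l v) ↔ M u v := by
  constructor
  · rintro (⟨t, h1, h2⟩ | ⟨t, h1, h2⟩ | ⟨t, c, h1, h2⟩ | ⟨t, c, h1, h2⟩ |
      ⟨t, c, h1, h2⟩ | ⟨t, c, h1, h2⟩) <;> simp_all [M]
  · rintro (⟨t, h1, h2⟩ | ⟨t, c, h1, h2⟩ | ⟨t, c, h1, h2⟩)
    · exact Or.inl ⟨t, by simp_all, by simp_all⟩
    · exact Or.inr (Or.inr (Or.inr (Or.inl ⟨t, c, by simp_all, by simp_all⟩)))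
    · exact Or.inr (Or.inr (Or.inr (Or.inr (Or.inr ⟨t, c, by simp_all, by simp_all⟩))))

lemma fW_lr (u v : T) : fW (T.l u) (T.r v) ↔ M v u := by
  constructor
  · rintro (⟨t, h1, h2⟩ | ⟨t, h1, h2⟩ | ⟨t, c, h1, h2⟩ | ⟨t, c, h1, h2⟩ |
      ⟨t, c, h1, h2⟩ | ⟨t, c, h1, h2⟩) <;> simp_all [M]
  · rintro (⟨t, h1, h2⟩ | ⟨t, c, h1, h2⟩ | ⟨t, c, h1, h2⟩)
    · exact Or.inr (Or.inl ⟨t, by simp_all, by simp_all⟩)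
    · exact Or.inr (Or.inr (Or.inl ⟨t, c, by simp_all, by simp_all⟩))
    · exact Or.inr (Or.inr (Or.inr (Or.inr (Or.inl ⟨t, c, by simp_all, by simp_all⟩))))

/-- Characterization of `LApp fW a` via the address translation `M`. -/
lemma h_char (a : T → T → Prop) (u v : T) :
    LApp fW a u v ↔ ∃ s t, M u s ∧ M v t ∧ a s t := by
  constructor
  · rintro (h1 | ⟨v1, hrl, v2, hA, v3, hch, hlr⟩)
    · exact absurd h1 (fW_rr _ _)
    · obtain rfl : v2 = v3 := rtg_empty (fun p q => by
        rintro ⟨m, hll, _⟩; exact fW_ll _ _ hll) hch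
      exact ⟨v1, v2, (fW_rl _ _).1 hrl, (fW_lr _ _).1 hlr, hA⟩
  · rintro ⟨s, t, hs, ht, hA⟩
    exact Or.inr ⟨s, (fW_rl _ _).2 hs, t, hA, t, .refl, (fW_lr _ _).2 ht⟩

/-! ### The coding facts -/

section Facts

variable (b : T → T → Prop)

-- Facts for `C_L w s := (s = T.l w)` with step `BL b`.
lemma CL1 : ∀ w s w', (s = T.l w) → Repl b w w' → ∃ s', BL b s s' ∧ (s' = T.l w') := by
  rintro w s w' rfl ⟨t, c, c', hb, rfl, rfl⟩
  exact ⟨T.l (T.p t c'), ⟨t, c, c', hb, rfl, rfl⟩, rfl⟩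

lemma CL2 : ∀ w s s', (s = T.l w) → BL b s s' → ∃ w', Repl b w w' ∧ (s' = T.l w') := by
  rintro w s s' rfl ⟨t, c, c', hb, he, rfl⟩
  obtain rfl : w = T.p t c := by injection he
  exact ⟨T.p t c', ⟨t, c, c', hb, rfl, rfl⟩, rfl⟩

lemma CL3 : ∀ s s', BL b s s' → ∃ w, (s = T.l w) := by
  rintro s s' ⟨t, c, c', hb, rfl, rfl⟩; exact ⟨T.p t c, rfl⟩

lemma CL4 : ∀ (w s s' : T), (s = T.l w) → (s' = T.l w) → s = s' := by
  rintro w s s' rfl rfl; rfl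

-- Facts for `C_R w s := (s = T.r (T.l w))` with step `BR b`.
lemma CR1 : ∀ w s w', (s = T.r (T.l w)) → Repl b w w' → ∃ s', BR b s s' ∧ (s' = T.r (T.l w')) := by
  rintro w s w' rfl ⟨t, c, c', hb, rfl, rfl⟩
  exact ⟨T.r (T.l (T.p t c')), ⟨t, c, c', hb, rfl, rfl⟩, rfl⟩

lemma CR2 : ∀ w s s', (s = T.r (T.l w)) → BR b s s' → ∃ w', Repl b w w' ∧ (s' = T.r (T.l w')) := by
  rintro w s s' rfl ⟨t, c, c', hb, he, rfl⟩
  obtain rfl : w = T.p t c := by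
    have h1 : T.l w = T.l (T.p t c) := by injection he
    injection h1
  exact ⟨T.p t c', ⟨t, c, c', hb, rfl, rfl⟩, rfl⟩

lemma CR3 : ∀ s s', BR b s s' → ∃ w, (s = T.r (T.l w)) := by
  rintro s s' ⟨t, c, c', hb, rfl, rfl⟩; exact ⟨T.p t c, rfl⟩

lemma CR4 : ∀ (w s s' : T), (s = T.r (T.l w)) → (s' = T.r (T.l w)) → s = s' := by
  rintro w s s' rfl rfl; rfl

-- Facts for `C_S w s := M (T.l w) s` with step `BS b`.
lemma CS1 : ∀ w s w', M (T.l w) s → Repl b w w' → ∃ s', BS b s s' ∧ M (T.l w') s' := by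
  rintro w s w' hM ⟨t0, c0, c0', hb, rfl, rfl⟩
  rcases hM with ⟨t, h1, h2⟩ | ⟨t, c, h1, h2⟩ | ⟨t, c, h1, h2⟩
  · exact absurd h1 (by simp)
  · simp only [T.l.injEq, T.p.injEq] at h1
    obtain ⟨rfl, rfl⟩ := h1
    subst h2
    exact ⟨T.l (T.p t c0'), Or.inl ⟨t, _, c0', hb, rfl, rfl⟩,
      Or.inr (Or.inl ⟨t, c0', rfl, rfl⟩)⟩
  · simp only [T.l.injEq, T.p.injEq] at h1
    obtain ⟨rfl, rfl⟩ := h1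
    subst h2
    exact ⟨T.r (T.l (T.p t c0')), Or.inr ⟨t, _, c0', hb, rfl, rfl⟩,
      Or.inr (Or.inr ⟨t, c0', rfl, rfl⟩)⟩

lemma CS2 : ∀ w s s', M (T.l w) s → BS b s s' → ∃ w', Repl b w w' ∧ M (T.l w') s' := by
  rintro w s s' hM hBS
  rcases hM with ⟨t, h1, rfl⟩ | ⟨t, c, h1, rfl⟩ | ⟨t, c, h1, rfl⟩
  · exact absurd h1 (by simp)
  · obtain rfl : w = T.p (T.l t) c := by simpa using h1
    rcases hBS with ⟨t1, c1, c1', hb, he, rfl⟩ | ⟨t1, c1, c1', hb, he, rfl⟩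
    · simp only [T.l.injEq, T.p.injEq] at he
      obtain ⟨rfl, rfl⟩ := he
      exact ⟨T.p (T.l t) c1', ⟨T.l t, _, c1', hb, rfl, rfl⟩,
        Or.inr (Or.inl ⟨t, c1', rfl, rfl⟩)⟩
    · exact absurd he (by simp)
  · obtain rfl : w = T.p (T.r t) c := by simpa using h1
    rcases hBS with ⟨t1, c1, c1', hb, he, rfl⟩ | ⟨t1, c1, c1', hb, he, rfl⟩
    · exact absurd he (by simp)
    · simp only [T.r.injEq, T.l.injEq, T.p.injEq] at he
      obtain ⟨rfl, rfl⟩ := he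
      exact ⟨T.p (T.r t) c1', ⟨T.r t, _, c1', hb, rfl, rfl⟩,
        Or.inr (Or.inr ⟨t, c1', rfl, rfl⟩)⟩

lemma CS3 : ∀ s s', BS b s s' → ∃ w, M (T.l w) s := by
  rintro s s' (⟨t, c, c', hb, rfl, rfl⟩ | ⟨t, c, c', hb, rfl, rfl⟩)
  · exact ⟨T.p (T.l t) c, Or.inr (Or.inl ⟨t, c, rfl, rfl⟩)⟩
  · exact ⟨T.p (T.r t) c, Or.inr (Or.inr ⟨t, c, rfl, rfl⟩)⟩

lemma CS4 : ∀ w s s', M (T.l w) s → M (T.l w) s' → s = s' := by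
  rintro w s s' (⟨t, h1, h2⟩ | ⟨t, c, h1, h2⟩ | ⟨t, c, h1, h2⟩)
    (⟨t', h1', h2'⟩ | ⟨t', c', h1', h2'⟩ | ⟨t', c', h1', h2'⟩) <;> simp_all

lemma M_r (u s : T) : M (T.r u) s ↔ s = T.r (T.r u) := by
  constructor
  · rintro (⟨t, h1, h2⟩ | ⟨t, c, h1, h2⟩ | ⟨t, c, h1, h2⟩) <;> simp_all
  · rintro rfl; exact Or.inl ⟨u, rfl, rfl⟩

end Facts

/-! ### Characterizations of the two sides -/

/-- Characterization of `k = LApp a (Repl b)`. -/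
lemma k_char (a b : T → T → Prop) (u v : T) :
    LApp a (Repl b) u v ↔
      ∃ e, a (T.r u) e ∧
        ReflTransGen (fun p q => ∃ m, BL b p m ∧ a m q) e (T.r v) := by
  exact master (C := fun w s => s = T.l w) (β := BL b) (A := a)
    (CL1 b) (CL2 b) (CL3 b) CL4
    (F := a) (CM := fun u s => s = u) (ρ := T.r)
    (fun u v => ⟨fun h => ⟨u, v, rfl, rfl, h⟩, by rintro ⟨s, t, rfl, rfl, h⟩; exact h⟩)
    (fun u s => Iff.rfl) (fun w s => Iff.rfl) u v

/-- Characterization of the left-hand side. -/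
lemma lhs_char (a b : T → T → Prop) (x y : T) :
    LApp (LApp fW a) (Repl b) x y ↔
      ∃ e, a (T.r (T.r x)) e ∧
        ReflTransGen (fun p q => ∃ m, BS b p m ∧ a m q) e (T.r (T.r y)) := by
  exact master (C := fun w s => M (T.l w) s) (β := BS b) (A := a)
    (CS1 b) (CS2 b) (CS3 b) CS4
    (F := LApp fW a) (CM := M) (ρ := fun u => T.r (T.r u))
    (h_char a) (M_r) (fun w s => Iff.rfl) x y

/-- `BL`-steps interleaved with `a`-steps. -/
def DLs (a b : T → T → Prop) : T → T → Prop := fun p q => ∃ m, BL b p m ∧ a m q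

/-- `BR`-steps interleaved with `a`-steps. -/
def DRs (a b : T → T → Prop) : T → T → Prop := fun p q => ∃ m, BR b p m ∧ a m q

/-- The relation realized by `LApp a (Repl b)` on `r`-translated addresses. -/
def Ap (a b : T → T → Prop) : T → T → Prop :=
  fun s t => ∃ e, a s e ∧ ReflTransGen (DLs a b) e t

/-- Characterization of the right-hand side. -/
lemma rhs_char (a b : T → T → Prop) (x y : T) :
    LApp (LApp a (Repl b)) (Repl b) x y ↔
      ∃ e, Ap a b (T.r (T.r x)) e ∧
        ReflTransGen (fun u v => ∃ m, BR b u m ∧ Ap a b m v) e (T.r (T.r y)) := by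
  exact master (C := fun w s => s = T.r (T.l w)) (β := BR b) (A := Ap a b)
    (CR1 b) (CR2 b) (CR3 b) CR4
    (F := LApp a (Repl b)) (CM := fun u s => s = T.r u) (ρ := fun u => T.r (T.r u))
    (fun u v => (k_char a b u v).trans
      ⟨fun h => ⟨T.r u, T.r v, rfl, rfl, h⟩, by rintro ⟨s, t, rfl, rfl, h⟩; exact h⟩)
    (fun u s => Iff.rfl) (fun w s => Iff.rfl) x y

/-- Interleaving: a chain of `BS`-steps is a chain of `Ap`-steps separated by `BR`-steps. -/
lemma combine (a b : T → T → Prop) (X Y : T) :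
    (∃ e, a X e ∧ ReflTransGen (fun p q => ∃ m, BS b p m ∧ a m q) e Y) ↔
      ∃ e, Ap a b X e ∧ ReflTransGen (fun u v => ∃ m, BR b u m ∧ Ap a b m v) e Y := by
  have h1 : ∀ p q, (∃ m, BS b p m ∧ a m q) ↔ (DLs a b p q ∨ DRs a b p q) := by
    intro p q
    constructor
    · rintro ⟨m, (h | h), ha⟩
      · exact Or.inl ⟨m, h, ha⟩
      · exact Or.inr ⟨m, h, ha⟩
    · rintro (⟨m, h, ha⟩ | ⟨m, h, ha⟩)
      · exact ⟨m, Or.inl h, ha⟩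
      · exact ⟨m, Or.inr h, ha⟩
  have h2 : ∀ p q, (∃ m, DRs a b p m ∧ ReflTransGen (DLs a b) m q) ↔
      (∃ m, BR b p m ∧ Ap a b m q) := by
    intro p q
    constructor
    · rintro ⟨m, ⟨m', hBR, ha⟩, hch⟩
      exact ⟨m', hBR, m, ha, hch⟩
    · rintro ⟨m', hBR, m, ha, hch⟩
      exact ⟨m, ⟨m', hBR, ha⟩, hch⟩
  constructor
  · rintro ⟨e, hA, hch⟩
    obtain ⟨z, hz1, hz2⟩ := rtg_union.1 ((rtg_congr h1).1 hch)
    exact ⟨z, ⟨e, hA, hz1⟩, (rtg_congr h2).1 hz2⟩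
  · rintro ⟨z, ⟨e, hA, hz1⟩, hch⟩
    exact ⟨e, hA, (rtg_congr h1).2 (rtg_union.2 ⟨z, hz1, (rtg_congr h2).2 hch⟩)⟩

end WProof

/-- `f_W` realizes the contraction combinator: `(f_W • a) • (!b) = (a • (!b)) • (!b)`. -/
theorem fW_realizes_W (a b : T → T → Prop)
    (ha : PartialInjection a) (hb : PartialInjection b) :
    LApp (LApp fW a) (Repl b) = LApp (LApp a (Repl b)) (Repl b) := by
  funext x y
  exact propext ((WProof.lhs_char a b x y).trans
    ((WProof.combine a b _ _).trans (WProof.rhs_char a b x y).symm))
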